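/- Let V = ⊕_{s∈S} ℂα_s be an IR-representation of (W,S) with all m_{rt} < ∞, and let G̃ be the associated graph with connected components S = ⊔_i S_i. Then the ring of W-equivariant endomorphisms End_W(V) is isomorphic to ℂ^g where g is the number of connected components of G̃. In particular, if G̃ is connected, every W-equivariant endomorphism of V is a scalar. -/

import Mathlib

/-- The diagonal algebra homomorphism from functions on `C` (pulled back along `q : S → C`)
into endomorphisms of `S → ℂ`. -/
def diagAlgHom (S : Type*) {C : Type*} (q : S → C) :
    (C → ℂ) →ₐ[ℂ] Module.End ℂ (S → ℂ) where
  toFun g :=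
    { toFun := fun v s => g (q s) * v s
      map_add' := fun u v => by funext s; simp [mul_add]
      map_smul' := fun c v => by funext s; simp [smul_eq_mul]; ring }
  map_one' := LinearMap.ext fun v => funext fun s => by simp
  map_mul' g h := LinearMap.ext fun v => funext fun s => by
    simp [Module.End.mul_apply]; ring
  map_zero' := LinearMap.ext fun v => funext fun s => by simp
  map_add' g h := LinearMap.ext fun v => funext fun s => by simp; ring
  commutes' c := LinearMap.ext fun v => funext fun s => by
    simp [Module.algebraMap_end_apply]

@[simp] theorem diagAlgHom_apply {S : Type*} {C : Type*} (q : S → C) (g : C → ℂ)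
    (v : S → ℂ) (s : S) : diagAlgHom S q g v s = g (q s) * v s := rfl

theorem diagAlgHom_single {S : Type*} [DecidableEq S] {C : Type*} (q : S → C) (g : C → ℂ)
    (t : S) :
    diagAlgHom S q g (Pi.single t 1 : S → ℂ) = g (q t) • (Pi.single t 1 : S → ℂ) := by
  funext s
  by_cases h : s = t
  · subst h; simp
  · simp [Pi.single_apply, h]

/-- For an IR-representation `V = ⊕ ℂα_s`, the algebra of `W`-equivariant
endomorphisms of `V` is isomorphic to `ℂ^g`, where `g` is the number of connected
components of the associated graph `G̃`. -/
theorem ir_rep_endomorphism_algebra {S : Type*} [Fintype S] [DecidableEq S]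
    {W : Type*} [Group W] (M : CoxeterMatrix S) (cs : CoxeterSystem M W)
    (hfin : ∀ r t : S, M r t ≠ 0)
    (k : S → S → ℕ) (hsym : ∀ r t, k r t = k t r)
    (hk1 : ∀ r t : S, r ≠ t → 1 ≤ k r t) (hk2 : ∀ r t : S, r ≠ t → 2 * k r t ≤ M r t)
    (a : S → S → ℂ) (ha : ∀ r t, a r t ≠ 0)
    (α : S → (S → ℂ)) (hα : ∀ s, α s = Pi.single s 1)
    (ρ : Representation ℂ W (S → ℂ))
    (hneg : ∀ r : S, ρ (cs.simple r) (α r) = -α r)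
    (hact : ∀ r t : S, r ≠ t → ρ (cs.simple r) (α t) =
      α t + (2 * (a r t / a t r) *
        ((Real.cos (k r t * Real.pi / (M r t)) : ℝ) : ℂ)) • α r)
    (Gt : SimpleGraph S)
    (hGt : ∀ r t : S, Gt.Adj r t ↔ r ≠ t ∧ 2 * k r t ≠ M r t)
    :
    Nonempty ((Subalgebra.centralizer ℂ
        (Set.range fun w : W => (ρ w : Module.End ℂ (S → ℂ)))) ≃ₐ[ℂ]
      (Gt.ConnectedComponent → ℂ)) := by
  classical
  -- the coefficient appearing in the reflection formula
  obtain ⟨c, hcdef⟩ : ∃ c : S → S → ℂ, ∀ r t, c r t = 2 * (a r t / a t r) *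
      ((Real.cos (k r t * Real.pi / (M r t)) : ℝ) : ℂ) :=
    ⟨_, fun _ _ => rfl⟩
  have hact' : ∀ r t : S, r ≠ t → ρ (cs.simple r) (α t) = α t + c r t • α r := by
    intro r t h; rw [hcdef]; exact hact r t h
  -- the coefficient is nonzero exactly on edges of G̃
  have hcne : ∀ r t : S, Gt.Adj r t → c r t ≠ 0 := by
    intro r t hadj
    obtain ⟨hne, hkm⟩ := (hGt r t).mp hadj
    have hm : 0 < (M r t : ℝ) := by
      exact_mod_cast Nat.pos_of_ne_zero (hfin r t)
    have hklt : (2 * k r t : ℝ) < (M r t : ℝ) := by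
      exact_mod_cast lt_of_le_of_ne (hk2 r t hne) hkm
    have hkpos : (0 : ℝ) < (k r t : ℝ) := by
      exact_mod_cast Nat.lt_of_lt_of_le Nat.zero_lt_one (hk1 r t hne)
    have hθpos : 0 < (k r t : ℝ) * Real.pi / (M r t) :=
      div_pos (mul_pos hkpos Real.pi_pos) hm
    have hθlt : (k r t : ℝ) * Real.pi / (M r t) < Real.pi / 2 := by
      rw [div_lt_div_iff₀ hm (by norm_num : (0:ℝ) < 2)]
      nlinarith [Real.pi_pos]
    have hcos : 0 < Real.cos ((k r t : ℝ) * Real.pi / (M r t)) :=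
      Real.cos_pos_of_mem_Ioo ⟨by linarith, hθlt⟩
    have hne0 : ((Real.cos ((k r t : ℝ) * Real.pi / (M r t)) : ℝ) : ℂ) ≠ 0 := by
      exact_mod_cast ne_of_gt hcos
    rw [hcdef]
    exact mul_ne_zero (mul_ne_zero two_ne_zero (div_ne_zero (ha r t) (ha t r))) hne0
  -- if c r t ≠ 0 (and r ≠ t) then r and t are adjacent, hence in the same component
  have hsame : ∀ r t : S, r ≠ t → c r t ≠ 0 →
      Gt.connectedComponentMk r = Gt.connectedComponentMk t := by
    intro r t hne hcne'
    have hadj : Gt.Adj r t := by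
      rw [hGt]
      refine ⟨hne, fun h => hcne' ?_⟩
      have hkpos : (0 : ℝ) < (k r t : ℝ) := by
        exact_mod_cast Nat.lt_of_lt_of_le Nat.zero_lt_one (hk1 r t hne)
      have hMk : (M r t : ℝ) = 2 * (k r t : ℝ) := by exact_mod_cast h.symm
      have hθ : ((k r t : ℝ) * Real.pi / (M r t)) = Real.pi / 2 := by
        rw [hMk]
        field_simp
      rw [hcdef, hθ]
      simp [Real.cos_pi_div_two]
    exact SimpleGraph.ConnectedComponent.sound hadj.reachable
  set q : S → Gt.ConnectedComponent := Gt.connectedComponentMk with hq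
  set D := diagAlgHom S q with hD
  -- D g acts on α t as scalar g (q t)
  have hDα : ∀ (g : Gt.ConnectedComponent → ℂ) (t : S), D g (α t) = g (q t) • α t := by
    intro g t
    rw [hα]
    exact diagAlgHom_single q g t
  have hbasis : ∀ t : S, (Pi.basisFun ℂ S) t = α t := by
    intro t
    rw [hα]
    funext s
    simp [Pi.basisFun_apply, Pi.single_apply]
  -- D g commutes with the representation
  have hDcomm : ∀ g : Gt.ConnectedComponent → ℂ, ∀ w : W,
      (ρ w : Module.End ℂ (S → ℂ)) * D g = D g * (ρ w : Module.End ℂ (S → ℂ)) := by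
    intro g w
    induction w using cs.simple_induction with
    | simple r =>
      apply (Pi.basisFun ℂ S).ext
      intro t
      rw [hbasis]
      simp only [Module.End.mul_apply]
      by_cases hrt : r = t
      · subst hrt
        rw [hneg, map_neg, hDα, map_smul, hneg]
        simp
      · have hne : r ≠ t := hrt
        rw [hact' r t hne, map_add, map_smul, hDα, hDα, map_smul, hact' r t hne]
        by_cases hczero : c r t = 0
        · rw [hczero]
          simp
        · have hqq : q r = q t := hsame r t hne hczero
          rw [hq] at hqq ⊢
          rw [hqq]
          simp only [smul_add, smul_smul]
          ring_nf
    | one => simp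
    | mul w₁ w₂ h₁ h₂ =>
      have hmul : (ρ (w₁ * w₂) : Module.End ℂ (S → ℂ)) =
          (ρ w₁ : Module.End ℂ (S → ℂ)) * (ρ w₂ : Module.End ℂ (S → ℂ)) := by
        simp [map_mul]
      rw [hmul, mul_assoc, h₂, ← mul_assoc, h₁, mul_assoc]
  have hDmem : ∀ g : Gt.ConnectedComponent → ℂ, D g ∈ Subalgebra.centralizer ℂ
      (Set.range fun w : W => (ρ w : Module.End ℂ (S → ℂ))) := by
    intro g
    rw [Subalgebra.mem_centralizer_iff]
    rintro x ⟨w, rfl⟩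
    exact hDcomm g w
  -- the restricted algebra hom
  set D' : (Gt.ConnectedComponent → ℂ) →ₐ[ℂ] (Subalgebra.centralizer ℂ
      (Set.range fun w : W => (ρ w : Module.End ℂ (S → ℂ)))) :=
    AlgHom.codRestrict D _ hDmem with hD'
  have hinj : Function.Injective D' := by
    intro g h hgh
    have heq : D g = D h := congrArg Subtype.val hgh
    funext x
    induction x using SimpleGraph.ConnectedComponent.ind with
    | _ s =>
      have h2 := congrFun (congrArg (fun (f : Module.End ℂ (S → ℂ)) => f (α s)) heq) s
      simp only [hDα] at h2
      have hαs : α s s = 1 := by rw [hα]; simp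
      simpa [hαs] using h2
  have hsurj : Function.Surjective D' := by
    rintro ⟨f, hf⟩
    rw [Subalgebra.mem_centralizer_iff] at hf
    have hfcomm : ∀ w : W,
        (ρ w : Module.End ℂ (S → ℂ)) * f = f * (ρ w : Module.End ℂ (S → ℂ)) :=
      fun w => hf _ ⟨w, rfl⟩
    -- f (α r) is a (-1)-eigenvector of ρ(s r)
    have heig : ∀ r : S, ρ (cs.simple r) (f (α r)) = -(f (α r)) := by
      intro r
      have h2 := congrArg (fun (g : Module.End ℂ (S → ℂ)) => g (α r)) (hfcomm (cs.simple r))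
      simp only [Module.End.mul_apply] at h2
      rw [hneg, map_neg] at h2
      exact h2
    -- the (-1)-eigenspace of ρ(s r) is ℂ α r
    have heigsp : ∀ (r : S) (v : S → ℂ), ρ (cs.simple r) v = -v → v = v r • α r := by
      intro r v hv
      have hvsum : v = ∑ t : S, v t • α t := by
        funext s
        rw [Finset.sum_apply]
        have hterm : ∀ t : S, (v t • α t) s = (Pi.single t (v t) : S → ℂ) s := by
          intro t
          rw [hα]
          by_cases h : s = t
          · subst h; simp
          · simp [Pi.single_apply, h, Ne.symm h]
        simp_rw [hterm]
        simp [Pi.single_apply]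
      -- compute coordinates of ρ (s r) v away from r
      have hcoord : ∀ s : S, s ≠ r → (ρ (cs.simple r) v) s = v s := by
        intro s hs
        conv_lhs => rw [hvsum]
        rw [map_sum]
        simp_rw [map_smul]
        rw [Finset.sum_apply]
        have hterm : ∀ t : S, (v t • ρ (cs.simple r) (α t)) s =
            if t = s then v s else 0 := by
          intro t
          by_cases hts : t = s
          · subst hts
            have htr : r ≠ t := Ne.symm hs
            rw [hact' r t htr]
            have hval : (α t + c r t • α r) t = 1 := by
              rw [hα, hα]
              simp [Pi.single_apply, Ne.symm hs]
            rw [if_pos rfl]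
            simp only [Pi.smul_apply]
            rw [hval]
            simp
          · rw [if_neg hts]
            by_cases htr : t = r
            · subst htr
              rw [hneg]
              simp only [Pi.smul_apply, Pi.neg_apply]
              rw [hα]
              simp [Pi.single_apply, Ne.symm hs]
            · rw [hact' r t (fun h => htr h.symm)]
              have hst : s ≠ t := fun h => hts h.symm
              have hval : (α t + c r t • α r) s = 0 := by
                rw [hα, hα]
                simp [Pi.single_apply, hs, hst]
              simp only [Pi.smul_apply]
              rw [hval, smul_eq_mul, mul_zero]
        simp_rw [hterm]
        simp
      have hzero : ∀ s : S, s ≠ r → v s = 0 := by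
        intro s hs
        have h1 := hcoord s hs
        rw [hv] at h1
        simp only [Pi.neg_apply] at h1
        linear_combination -h1 / 2
      funext s
      by_cases hsr : s = r
      · subst hsr
        rw [hα]
        simp
      · rw [hzero s hsr, hα]
        simp [Pi.single_apply, hsr]
    -- so f (α r) = λ r • α r
    set lam : S → ℂ := fun r => f (α r) r with hlam
    have hfα : ∀ r : S, f (α r) = lam r • α r := fun r => heigsp r (f (α r)) (heig r)
    -- λ is constant on edges
    have hedge : ∀ r t : S, Gt.Adj r t → lam r = lam t := by
      intro r t hadj
      have hne : r ≠ t := hadj.ne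
      have hcomm := congrArg (fun (g : Module.End ℂ (S → ℂ)) => g (α t))
        (hfcomm (cs.simple r))
      simp only [Module.End.mul_apply] at hcomm
      rw [hfα, map_smul, hact' r t hne, map_add, map_smul, hfα, hfα] at hcomm
      have h2 := congrFun hcomm r
      have hαtr : α t r = 0 := by
        rw [hα]; simp [Pi.single_apply, hne]
      have hαrr : α r r = 1 := by rw [hα]; simp
      simp only [Pi.add_apply, Pi.smul_apply, smul_eq_mul, smul_add, hαtr, hαrr,
        mul_one, mul_zero, zero_add, add_zero] at h2
      have hcrt : c r t ≠ 0 := hcne r t hadj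
      exact mul_left_cancel₀ hcrt (by linear_combination -h2)
    -- λ descends to components
    have hreach : ∀ {v w : S}, Gt.Walk v w → lam v = lam w := by
      intro v w p
      induction p with
      | nil => rfl
      | cons hadj _ ih => exact (hedge _ _ hadj).trans ih
    refine ⟨SimpleGraph.ConnectedComponent.lift lam (fun v w p _ => hreach p), ?_⟩
    apply Subtype.ext
    show D _ = f
    apply (Pi.basisFun ℂ S).ext
    intro t
    rw [hbasis, hDα, hfα]
    congr 1
  exact ⟨(AlgEquiv.ofBijective D' ⟨hinj, hsurj⟩).symm⟩
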